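/- Let (X, 𝒜) be an act with 𝒜 ⊆ X^X a countable submonoid (under composition, containing the identity), and let ℓ : dom(ℓ) → X be a function on a countable dom(ℓ) ⊆ X^ω. The following are equivalent: (1) X admits a metrizable topology making every α ∈ 𝒜 continuous, in which every s ∈ dom(ℓ) converges to ℓ(s); (2) X admits a Hausdorff such topology; (3) (a) for any s ∈ dom(ℓ), α ∈ 𝒜, and x ∈ X with x ≠ α(ℓ(s)), the set {n : α(s_n) = x} is finite, and (b) for any s, t ∈ dom(ℓ) and α, β ∈ 𝒜 with α(ℓ(s)) ≠ β(ℓ(t)), there exists a finite F ⊆ ω with α(s_n) ≠ β(t_m) for all n, m ∈ ω \ F. -/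

import Mathlib

open Filter

section Aux

open Set Relation

private theorem easy_dir {X : Type*} {A : Set (X → X)} {D : Set (ℕ → X)} {ℓ : (ℕ → X) → X}
    (τ : TopologicalSpace X) (hT2 : @T2Space X τ)
    (hcont : ∀ α ∈ A, @Continuous X X τ τ α)
    (htd : ∀ s ∈ D, Tendsto s atTop (@nhds X τ (ℓ s))) :
    (∀ s ∈ D, ∀ α ∈ A, ∀ x : X, x ≠ α (ℓ s) → {n : ℕ | α (s n) = x}.Finite) ∧
      (∀ s ∈ D, ∀ t ∈ D, ∀ α ∈ A, ∀ β ∈ A, α (ℓ s) ≠ β (ℓ t) →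
        ∃ F : Set ℕ, F.Finite ∧ ∀ n ∉ F, ∀ m ∉ F, α (s n) ≠ β (t m)) := by
  letI := τ
  haveI := hT2
  constructor
  · intro s hs α hα x hx
    have h1 : Tendsto (fun n => α (s n)) atTop (nhds (α (ℓ s))) :=
      ((hcont α hα).tendsto (ℓ s)).comp (htd s hs)
    have h2 : ∀ᶠ n in atTop, α (s n) ≠ x := by
      have hmem : {x}ᶜ ∈ nhds (α (ℓ s)) :=
        isOpen_compl_singleton.mem_nhds (by simpa using Ne.symm hx)
      exact h1 hmem
    obtain ⟨N, hN⟩ := eventually_atTop.mp h2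
    refine (Set.finite_Iio N).subset fun n hn => ?_
    by_contra hlt
    exact hN n (not_lt.mp fun h => hlt h) hn
  · intro s hs t ht α hα β hβ hne
    obtain ⟨u, v, hu, hv, hxu, hyv, huv⟩ := t2_separation hne
    have h1 : ∀ᶠ n in atTop, α (s n) ∈ u :=
      (((hcont α hα).tendsto (ℓ s)).comp (htd s hs)) (hu.mem_nhds hxu)
    have h2 : ∀ᶠ n in atTop, β (t n) ∈ v :=
      (((hcont β hβ).tendsto (ℓ t)).comp (htd t ht)) (hv.mem_nhds hyv)
    obtain ⟨N1, hN1⟩ := eventually_atTop.mp h1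
    obtain ⟨N2, hN2⟩ := eventually_atTop.mp h2
    refine ⟨Set.Iio (max N1 N2), Set.finite_Iio _, fun n hn m hm heq => ?_⟩
    simp only [Set.mem_Iio, not_lt] at hn hm
    exact Set.disjoint_left.mp huv (hN1 n (le_trans (le_max_left _ _) hn))
      (heq ▸ hN2 m (le_trans (le_max_right _ _) hm))

private theorem metrizable_dir {X : Type*} {A : Set (X → X)} (hAc : A.Countable)
    (hid : id ∈ A) (hcomp : ∀ α ∈ A, ∀ β ∈ A, α ∘ β ∈ A)
    {D : Set (ℕ → X)} (hD : D.Countable) (ℓ : (ℕ → X) → X)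
    (ha : ∀ s ∈ D, ∀ α ∈ A, ∀ x : X, x ≠ α (ℓ s) → {n : ℕ | α (s n) = x}.Finite)
    (hb : ∀ s ∈ D, ∀ t ∈ D, ∀ α ∈ A, ∀ β ∈ A, α (ℓ s) ≠ β (ℓ t) →
      ∃ F : Set ℕ, F.Finite ∧ ∀ n ∉ F, ∀ m ∉ F, α (s n) ≠ β (t m)) :
    ∃ τ : TopologicalSpace X, @TopologicalSpace.MetrizableSpace X τ ∧
      (∀ α ∈ A, @Continuous X X τ τ α) ∧
      ∀ s ∈ D, Tendsto s atTop (@nhds X τ (ℓ s)) := by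
  classical
  haveI : Countable ↥A := hAc.to_subtype
  haveI : Countable ↥D := hD.to_subtype
  haveI : Nonempty ↥A := ⟨⟨id, hid⟩⟩
  -- Index type for the family of sequences `α ∘ s` with limits `α (ℓ s)`.
  let sqq : ↥A × ↥D → ℕ → X := fun i n => (i.1 : X → X) ((i.2 : ℕ → X) n)
  let lmm : ↥A × ↥D → X := fun i => (i.1 : X → X) (ℓ (i.2 : ℕ → X))
  have ha' : ∀ (i : ↥A × ↥D) (x : X), x ≠ lmm i → {n : ℕ | sqq i n = x}.Finite :=
    fun i x hx => ha (i.2 : ℕ → X) i.2.2 (i.1 : X → X) i.1.2 x hx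
  have hb' : ∀ i j : ↥A × ↥D, lmm i ≠ lmm j → ∃ F : Set ℕ, F.Finite ∧
      ∀ n ∉ F, ∀ m ∉ F, sqq i n ≠ sqq j m :=
    fun i j h => hb (i.2 : ℕ → X) i.2.2 (j.2 : ℕ → X) j.2.2 (i.1 : X → X) i.1.2
      (j.1 : X → X) j.1.2 h
  obtain ⟨c, hc⟩ := Countable.exists_injective_nat (↥A × ↥D)
  obtain ⟨g, hg⟩ := exists_surjective_nat ↥A
  let tk : ℕ → ↥A := fun k => g (Nat.unpair k).1
  have htk : ∀ (α : ↥A) (k₀ : ℕ), ∃ k, k₀ ≤ k ∧ tk k = α := by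
    intro α k₀
    obtain ⟨j, hj⟩ := hg α
    exact ⟨Nat.pair j k₀, Nat.right_le_pair _ _, by simp only [tk, Nat.unpair_pair, hj]⟩
  let act : ↥A → ↥A × ↥D → ↥A × ↥D := fun α i =>
    (⟨(α : X → X) ∘ (i.1 : X → X), hcomp _ α.2 _ i.1.2⟩, i.2)
  -- the countable set of relevant points
  let Y : Set X := ⋃ i : ↥A × ↥D, insert (lmm i) (Set.range (sqq i))
  have hYc : Y.Countable := countable_iUnion fun i => (countable_range _).insert _
  haveI := hYc.to_subtype
  obtain ⟨e, he⟩ := Countable.exists_injective_nat ↥Y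
  let code : X → ℕ := fun z => if h : z ∈ Y then e ⟨z, h⟩ else 0
  have hsqY : ∀ (i : ↥A × ↥D) (m : ℕ), sqq i m ∈ Y := fun i m =>
    Set.mem_iUnion.mpr ⟨i, Set.mem_insert_of_mem _ ⟨m, rfl⟩⟩
  have hcodefin : ∀ k : ℕ, {z | z ∈ Y ∧ code z ≤ k}.Finite := by
    intro k
    have h1 : {w : ↥Y | e w ≤ k}.Finite := (Set.finite_Iic k).preimage he.injOn
    have h2 : ((fun (w : ↥Y) => (w : X)) '' {w : ↥Y | e w ≤ k}).Finite := h1.image _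
    refine h2.subset ?_
    rintro z ⟨hz, hk⟩
    refine ⟨⟨z, hz⟩, ?_, rfl⟩
    simpa only [Set.mem_setOf_eq, code, dif_pos hz] using hk
  -- separating finite sets from condition (b)
  choose F₀ hF₀fin hF₀ using hb'
  let FF : ↥A × ↥D → ↥A × ↥D → Set ℕ := fun i j =>
    (if h : lmm i ≠ lmm j then F₀ i j h else ∅) ∪ (if h : lmm j ≠ lmm i then F₀ j i h else ∅)
  have hFFfin : ∀ i j, (FF i j).Finite := by
    intro i j
    apply Set.Finite.union <;> · split
                                 · apply hF₀fin
                                 · exact Set.finite_empty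
  have hFFsym : ∀ i j, FF i j = FF j i := fun i j => Set.union_comm _ _
  have hFFkey : ∀ i j, lmm i ≠ lmm j → ∀ n ∉ FF i j, ∀ m ∉ FF i j, sqq i n ≠ sqq j m := by
    intro i j h n hn m hm
    refine hF₀ i j h n (fun h' => hn ?_) m (fun h' => hm ?_) <;>
      · rw [Set.mem_union, dif_pos h]
        exact Or.inl h'
  let M : ↥A × ↥D → ↥A × ↥D → Set ℕ := fun i j =>
    FF i j ∪ {m | sqq i m ∈ sqq j '' FF i j ∧ sqq i m ≠ lmm i}
  have hMfin : ∀ i j, (M i j).Finite := by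
    intro i j
    refine (hFFfin i j).union ?_
    refine Set.Finite.subset (Set.Finite.biUnion
      (((hFFfin i j).image (sqq j)).diff (t := {lmm i})) (fun z hz => ha' i z hz.2)) ?_
    rintro m ⟨hm1, hm2⟩
    exact Set.mem_biUnion ⟨hm1, hm2⟩ rfl
  let J : ℕ → ↥A × ↥D → Set (↥A × ↥D) := fun k i => {j | c j ≤ c i + k ∧ lmm j ≠ lmm i}
  have hJfin : ∀ k i, (J k i).Finite := by
    intro k i
    exact ((Set.finite_Iic (c i + k)).preimage hc.injOn).subset fun j hj => hj.1
  let D3 : ℕ → ↥A × ↥D → Set ℕ := fun k i => {m | sqq i m ≠ lmm i ∧ code (sqq i m) ≤ k}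
  have hD3fin : ∀ k i, (D3 k i).Finite := by
    intro k i
    refine Set.Finite.subset (Set.Finite.biUnion
      (((hcodefin k).diff (t := {lmm i}))) (fun z hz => ha' i z hz.2)) ?_
    rintro m ⟨hm1, hm2⟩
    exact Set.mem_biUnion ⟨⟨hsqY i m, hm2⟩, hm1⟩ rfl
  -- threshold functions
  let bad : ℕ → (↥A × ↥D → ℕ) → ↥A × ↥D → Set ℕ := fun k ν i =>
    Set.Iic (ν i) ∪ Set.Iic (ν (act (tk k) i)) ∪ (⋃ j ∈ J (k+1) i, M i j) ∪ D3 (k+1) i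
  have hbadfin : ∀ k ν i, (bad k ν i).Finite := fun k ν i =>
    (((Set.finite_Iic _).union (Set.finite_Iic _)).union
      ((hJfin (k+1) i).biUnion fun j _ => hMfin i j)).union (hD3fin (k+1) i)
  let N : ℕ → ↥A × ↥D → ℕ := fun k =>
    Nat.rec (fun _ => 0) (fun k ν i => sSup (bad k ν i) + 1) k
  have hNb : ∀ k i, ∀ m ∈ bad k (N k) i, m < N (k+1) i := by
    intro k i m hm
    exact Nat.lt_succ_of_le (le_csSup (hbadfin k (N k) i).bddAbove hm)
  have hN1 : ∀ k i, N k i < N (k+1) i := fun k i =>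
    hNb k i _ (Or.inl (Or.inl (Or.inl (Set.mem_Iic.mpr le_rfl))))
  have hNtask : ∀ k i, N k (act (tk k) i) < N (k+1) i := fun k i =>
    hNb k i _ (Or.inl (Or.inl (Or.inr (Set.mem_Iic.mpr le_rfl))))
  have hNM : ∀ k i j, j ∈ J (k+1) i → ∀ m ∈ M i j, m < N (k+1) i := fun k i j hj m hm =>
    hNb k i m (Or.inl (Or.inr (Set.mem_biUnion hj hm)))
  have hND3 : ∀ k i, ∀ m ∈ D3 (k+1) i, m < N (k+1) i := fun k i m hm =>
    hNb k i m (Or.inr hm)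
  have hNmono : ∀ (i) (k k' : ℕ), k ≤ k' → N k i ≤ N k' i := by
    intro i k k' h
    induction k', h using Nat.le_induction with
    | base => exact le_rfl
    | succ n hn ih => exact ih.trans (hN1 n i).le
  -- the equivalence relations
  let rel : ℕ → X → X → Prop := fun k a b =>
    ∃ (i : ↥A × ↥D) (m : ℕ), N k i ≤ m ∧ lmm i = a ∧ sqq i m = b
  let E : ℕ → X → X → Prop := fun k => EqvGen (rel k)
  have hEmono : ∀ (k k' : ℕ), k ≤ k' → ∀ a b, E k' a b → E k a b := by
    intro k k' h a b hE
    refine Relation.EqvGen.mono ?_ _ _ hE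
    rintro a b ⟨i, m, hm, h1, h2⟩
    exact ⟨i, m, le_trans (hNmono i k k' h) hm, h1, h2⟩
  have hErefl : ∀ k a, E k a a := fun k a => EqvGen.refl a
  have hEsymm : ∀ k a b, E k a b → E k b a := fun k a b h => EqvGen.symm a b h
  have hEtrans : ∀ k a b cc, E k a b → E k b cc → E k a cc :=
    fun k a b cc h1 h2 => EqvGen.trans a b cc h1 h2
  -- continuity homomorphism property
  have hom : ∀ (α : ↥A) (k : ℕ), ∃ k', ∀ a b, E k' a b →
      E k ((α : X → X) a) ((α : X → X) b) := by
    intro α k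
    obtain ⟨k₁, hk₁, htk₁⟩ := htk α k
    refine ⟨k₁ + 1, ?_⟩
    intro a b hE
    induction hE with
    | rel a b hr =>
      obtain ⟨i, m, hm, h1, h2⟩ := hr
      refine EqvGen.rel _ _ ⟨act α i, m, ?_, by rw [← h1]; rfl, by rw [← h2]; rfl⟩
      calc N k (act α i) ≤ N k₁ (act α i) := hNmono _ k k₁ hk₁
        _ = N k₁ (act (tk k₁) i) := by rw [htk₁]
        _ ≤ N (k₁+1) i := (hNtask k₁ i).le
        _ ≤ m := hm
    | refl a => exact EqvGen.refl _
    | symm a b _ ih => exact EqvGen.symm _ _ ih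
    | trans a b cc _ _ ih1 ih2 => exact EqvGen.trans _ _ _ ih1 ih2
  -- no "genuine in-edge" above the code of a point
  have hnoin : ∀ (z : X) (k : ℕ), code z + 1 ≤ k → ∀ (i : ↥A × ↥D) (m : ℕ),
      N k i ≤ m → sqq i m = z → lmm i = z := by
    intro z k hk i m hm hz
    by_contra hne
    obtain ⟨k', rfl⟩ : ∃ k', k = k' + 1 := ⟨k - 1, by omega⟩
    have hmem : m ∈ D3 (k'+1) i := by
      refine ⟨by rw [hz]; exact fun h => hne h.symm, ?_⟩
      rw [hz]; omega
    exact absurd hm (not_le.mpr (hND3 k' i m hmem))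
  -- the "in-degree" lemma
  have aux : ∀ (k : ℕ) (i j : ↥A × ↥D), lmm i ≠ lmm j → c i ≤ c j →
      ∀ m m', N (k+1) i ≤ m → N (k+1) j ≤ m' → sqq i m = sqq j m' → sqq j m' = lmm j := by
    intro k i j hne hcij m m' hm hm' heq
    have hJ : i ∈ J (k+1) j := ⟨by omega, hne⟩
    have hMb : ∀ μ ∈ M j i, μ < N (k+1) j := hNM k j i hJ
    have hm'M : m' ∉ M j i := fun hmem => absurd hm' (not_le.mpr (hMb m' hmem))
    have hm'F : m' ∉ FF j i := fun hmem => hm'M (Or.inl hmem)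
    have hmF : m ∈ FF i j := by
      by_contra hmf
      exact hFFkey i j hne m hmf m' (by rw [hFFsym i j]; exact hm'F) heq
    have himg : sqq j m' ∈ sqq i '' FF j i := ⟨m, by rw [← hFFsym i j]; exact hmF, heq⟩
    by_contra hlast
    exact hm'M (Or.inr ⟨himg, hlast⟩)
  have idg : ∀ (k : ℕ), 1 ≤ k → ∀ (i j : ↥A × ↥D), lmm i ≠ lmm j →
      ∀ m m', N k i ≤ m → N k j ≤ m' → sqq i m = sqq j m' →
      sqq i m = lmm i ∨ sqq i m = lmm j := by
    intro k hk i j hne m m' hm hm' heq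
    obtain ⟨k', rfl⟩ : ∃ k', k = k' + 1 := ⟨k - 1, by omega⟩
    rcases le_total (c i) (c j) with hcc | hcc
    · refine Or.inr ?_
      rw [heq]
      exact aux k' i j hne hcc m m' hm hm' heq
    · exact Or.inl (aux k' j i hne.symm hcc m' m hm' hm heq.symm)
  -- separation
  have hsep : ∀ x y : X, x ≠ y → ∃ k, ¬ E k x y := by
    intro x y hxy
    refine ⟨max (code x + 1) (code y + 1), ?_⟩
    set k := max (code x + 1) (code y + 1) with hkdef
    have hkx : code x + 1 ≤ k := le_max_left _ _
    have hky : code y + 1 ≤ k := le_max_right _ _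
    have hk1 : 1 ≤ k := le_trans (by omega) hkx
    set T : Set X := {z | Relation.ReflTransGen (rel k) x z} with hTdef
    have hxT : x ∈ T := Relation.ReflTransGen.refl
    have claim1 : ∀ z ∈ T, z = x ∨ ∃ w, w ∈ T ∧ w ≠ z ∧ rel k w z := by
      intro z hz
      induction hz with
      | refl => exact Or.inl rfl
      | @tail b cc hab hbc ih =>
        by_cases hbc' : b = cc
        · exact hbc' ▸ ih
        · exact Or.inr ⟨b, hab, hbc', hbc⟩
    have upcl : ∀ z ∈ T, ∀ w, rel k w z → w ∈ T := by
      intro z hz w hwz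
      by_cases hw : w = z
      · exact hw ▸ hz
      rcases claim1 z hz with rfl | ⟨w'', hw''T, hne'', hrel''⟩
      · obtain ⟨i, m, hm, h1, h2⟩ := hwz
        exact absurd (h1 ▸ hnoin z k hkx i m hm h2) hw
      · by_cases hww : w = w''
        · exact hww ▸ hw''T
        · obtain ⟨i, m, hm, h1, h2⟩ := hwz
          obtain ⟨j, m', hm', h1', h2'⟩ := hrel''
          have hlmne : lmm i ≠ lmm j := by rw [h1, h1']; exact hww
          rcases idg k hk1 i j hlmne m m' hm hm' (h2.trans h2'.symm) with hcase | hcase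
          · exact (hw (by rw [← h1, ← hcase, h2])).elim
          · exact (hne'' (by rw [← h1', ← hcase, h2])).elim
    have ydodge : y ∉ T := by
      intro hy
      rcases claim1 y hy with rfl | ⟨w, _, hne, hrel⟩
      · exact hxy rfl
      · obtain ⟨i, m, hm, h1, h2⟩ := hrel
        exact hne (h1 ▸ hnoin y k hky i m hm h2)
    intro hE
    have key : ∀ a b, E k a b → (a ∈ T ↔ b ∈ T) := by
      intro a b hab
      induction hab with
      | rel a b hr =>
        constructor
        · intro haT
          exact Relation.ReflTransGen.tail haT hr
        · intro hbT
          exact upcl b hbT a hr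
      | refl a => exact Iff.rfl
      | symm a b _ ih => exact ih.symm
      | trans a b cc _ _ ih1 ih2 => exact ih1.trans ih2
    exact ydodge ((key x y hE).mp hxT)
  -- the metric
  let fnd : ∀ x y : X, x ≠ y → ℕ := fun x y h => Nat.find (hsep x y h)
  let d : X → X → ℝ := fun x y => if h : x = y then 0 else (2⁻¹ : ℝ) ^ (fnd x y h)
  have hd_self : ∀ x, d x x = 0 := fun x => dif_pos rfl
  have hd_pos : ∀ x y (h : x ≠ y), d x y = (2⁻¹ : ℝ) ^ (fnd x y h) := fun x y h => dif_neg h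
  have hEk_of_lt : ∀ (x y : X) (h : x ≠ y) (k : ℕ), k < fnd x y h → E k x y := by
    intro x y h k hk
    have := Nat.find_min (hsep x y h) hk
    exact not_not.mp this
  have hfnd_spec : ∀ (x y : X) (h : x ≠ y), ¬ E (fnd x y h) x y := fun x y h =>
    Nat.find_spec (hsep x y h)
  have hfnd_symm : ∀ (x y : X) (h : x ≠ y), fnd x y h = fnd y x h.symm := by
    intro x y h
    apply le_antisymm
    · exact Nat.find_le (fun hE => hfnd_spec y x h.symm (hEsymm _ _ _ hE))
    · exact Nat.find_le (fun hE => hfnd_spec x y h (hEsymm _ _ _ hE))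
  have hd_comm : ∀ x y, d x y = d y x := by
    intro x y
    by_cases h : x = y
    · rw [h]
    · rw [hd_pos x y h, hd_pos y x (Ne.symm h), hfnd_symm x y h]
  have hd_nonneg : ∀ x y, 0 ≤ d x y := by
    intro x y
    by_cases h : x = y
    · rw [h, hd_self]
    · rw [hd_pos x y h]
      positivity
  have hdlt : ∀ (x y : X) (k : ℕ), d x y < (2⁻¹ : ℝ) ^ k ↔ E k x y := by
    intro x y k
    by_cases h : x = y
    · simp only [h, hd_self]
      constructor
      · intro _; exact hErefl k y
      · intro _; positivity
    · rw [hd_pos x y h]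
      rw [pow_lt_pow_iff_right_of_lt_one₀ (by norm_num) (by norm_num)]
      constructor
      · intro hk
        exact hEk_of_lt x y h k hk
      · intro hE
        rcases lt_or_ge k (fnd x y h) with h' | h'
        · exact h'
        · exact absurd (hEmono _ _ h' _ _ hE) (hfnd_spec x y h)
  have hd_tri : ∀ x y z : X, d x z ≤ d x y + d y z := by
    intro x y z
    by_cases hxz : x = z
    · rw [hxz, hd_self]
      exact add_nonneg (hd_nonneg _ _) (hd_nonneg _ _)
    by_cases hxy : x = y
    · subst hxy
      rw [hd_self, zero_add]
    by_cases hyz : y = z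
    · subst hyz
      rw [hd_self, add_zero]
    have hmin : min (fnd x y hxy) (fnd y z hyz) ≤ fnd x z hxz := by
      rw [Nat.le_find_iff]
      intro m hm
      rw [not_not]
      have h1 : E m x y := hEk_of_lt x y hxy m (lt_of_lt_of_le hm (min_le_left _ _))
      have h2 : E m y z := hEk_of_lt y z hyz m (lt_of_lt_of_le hm (min_le_right _ _))
      exact hEtrans m x y z h1 h2
    have : d x z ≤ max (d x y) (d y z) := by
      rw [hd_pos x z hxz, hd_pos x y hxy, hd_pos y z hyz]
      rcases min_cases (fnd x y hxy) (fnd y z hyz) with ⟨hmeq, _⟩ | ⟨hmeq, _⟩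
      · refine le_trans ?_ (le_max_left _ _)
        exact pow_le_pow_of_le_one (by norm_num) (by norm_num) (hmeq ▸ hmin)
      · refine le_trans ?_ (le_max_right _ _)
        exact pow_le_pow_of_le_one (by norm_num) (by norm_num) (hmeq ▸ hmin)
    exact this.trans (max_le_add_of_nonneg (hd_nonneg x y) (hd_nonneg y z))
  have hd_eq : ∀ x y : X, d x y = 0 → x = y := by
    intro x y h
    by_contra hne
    rw [hd_pos x y hne] at h
    exact absurd h (by positivity)
  letI m : MetricSpace X :=
    { dist := d
      dist_self := hd_self
      dist_comm := hd_comm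
      dist_triangle := hd_tri
      eq_of_dist_eq_zero := fun {x y} h => hd_eq x y h }
  have hdist : ∀ x y : X, dist x y = d x y := fun _ _ => rfl
  refine ⟨inferInstance, inferInstance, ?_, ?_⟩
  · -- continuity
    intro α hα
    rw [Metric.continuous_iff]
    intro x ε hε
    obtain ⟨k, hk⟩ := exists_pow_lt_of_lt_one hε (by norm_num : (2⁻¹:ℝ) < 1)
    obtain ⟨k', hk'⟩ := hom ⟨α, hα⟩ k
    refine ⟨(2⁻¹ : ℝ) ^ k', by positivity, fun y hy => ?_⟩
    rw [hdist] at hy ⊢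
    have hE : E k' y x := (hdlt y x k').mp hy
    have : E k (α y) (α x) := hk' y x hE
    exact lt_trans ((hdlt (α y) (α x) k).mpr this) hk
  · -- convergence
    intro s hs
    rw [Metric.tendsto_atTop]
    intro ε hε
    obtain ⟨k, hk⟩ := exists_pow_lt_of_lt_one hε (by norm_num : (2⁻¹:ℝ) < 1)
    refine ⟨N k (⟨id, hid⟩, ⟨s, hs⟩), fun n hn => ?_⟩
    rw [hdist]
    have hE : E k (s n) (ℓ s) := by
      refine hEsymm k _ _ (EqvGen.rel _ _ ⟨(⟨id, hid⟩, ⟨s, hs⟩), n, hn, rfl, rfl⟩)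
    exact lt_trans ((hdlt (s n) (ℓ s) k).mpr hE) hk

end Aux

/-- For an act `(X, 𝒜)` with a countable submonoid `𝒜 ⊆ X^X` and a function `ℓ` on a
countable set `D` of sequences, the existence of a metrizable (resp. Hausdorff)
shift-continuous topology in which every `s ∈ D` converges to `ℓ s` is equivalent to the
separation conditions (3a) and (3b). -/
theorem stmt12 {X : Type*} (A : Set (X → X)) (hAc : A.Countable)
    (hid : id ∈ A) (hcomp : ∀ α ∈ A, ∀ β ∈ A, α ∘ β ∈ A)
    (D : Set (ℕ → X)) (hD : D.Countable) (ℓ : (ℕ → X) → X) :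
    ((∃ τ : TopologicalSpace X, @TopologicalSpace.MetrizableSpace X τ ∧
        (∀ α ∈ A, @Continuous X X τ τ α) ∧
        ∀ s ∈ D, Tendsto s atTop (@nhds X τ (ℓ s))) ↔
      ((∀ s ∈ D, ∀ α ∈ A, ∀ x : X, x ≠ α (ℓ s) → {n : ℕ | α (s n) = x}.Finite) ∧
       (∀ s ∈ D, ∀ t ∈ D, ∀ α ∈ A, ∀ β ∈ A, α (ℓ s) ≠ β (ℓ t) →
         ∃ F : Set ℕ, F.Finite ∧ ∀ n ∉ F, ∀ m ∉ F, α (s n) ≠ β (t m)))) ∧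
    ((∃ τ : TopologicalSpace X, @T2Space X τ ∧
        (∀ α ∈ A, @Continuous X X τ τ α) ∧
        ∀ s ∈ D, Tendsto s atTop (@nhds X τ (ℓ s))) ↔
      ((∀ s ∈ D, ∀ α ∈ A, ∀ x : X, x ≠ α (ℓ s) → {n : ℕ | α (s n) = x}.Finite) ∧
       (∀ s ∈ D, ∀ t ∈ D, ∀ α ∈ A, ∀ β ∈ A, α (ℓ s) ≠ β (ℓ t) →
         ∃ F : Set ℕ, F.Finite ∧ ∀ n ∉ F, ∀ m ∉ F, α (s n) ≠ β (t m)))) := by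
  constructor
  · constructor
    · rintro ⟨τ, hmet, hcont, htd⟩
      have hT2 : @T2Space X τ := by
        letI := τ
        haveI := hmet
        infer_instance
      exact easy_dir τ hT2 hcont htd
    · rintro ⟨h1, h2⟩
      exact metrizable_dir hAc hid hcomp hD ℓ h1 h2
  · constructor
    · rintro ⟨τ, hT2, hcont, htd⟩
      exact easy_dir τ hT2 hcont htd
    · rintro ⟨h1, h2⟩
      obtain ⟨τ, hmet, hcont, htd⟩ := metrizable_dir hAc hid hcomp hD ℓ h1 h2
      refine ⟨τ, ?_, hcont, htd⟩
      letI := τ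
      haveI := hmet
      infer_instance
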